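/- For z ∈ H¹_{[0]}(-b,T;ℝⁿ), τ ∈ [0,b], and δ with τ + δ ∈ [0,b], the remainder R_h(h,δ)(t) = δ ∫₀¹ ḣ(t-τ-sδ) ds satisfies ‖R_h‖_{L²(0,T;ℝⁿ)} ≤ |δ| · ‖h‖_{H¹(-b,T;ℝⁿ)} for all h ∈ H¹_{[0]}(-b,T;ℝⁿ). -/

import Mathlib

open MeasureTheory Real
open scoped ENNReal NNReal

/-- The `H¹(-b,T)` norm of a function `h` with weak derivative `h'`. -/
noncomputable def H1Norm (n : ℕ) (b T : ℝ) (h h' : ℝ → EuclideanSpace ℝ (Fin n)) : ℝ :=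
  Real.sqrt (((eLpNorm h 2 (volume.restrict (Set.Ioo (-b) T))).toReal) ^ 2 +
    ((eLpNorm h' 2 (volume.restrict (Set.Ioo (-b) T))).toReal) ^ 2)

/-- the remainder `R_h(h,δ)(t) = δ ∫₀¹ ḣ(t-τ-sδ) ds` satisfies
`‖R_h‖_{L²(0,T)} ≤ |δ| ‖h‖_{H¹(-b,T)}` for `h ∈ H¹_{[0]}(-b,T;ℝⁿ)`. -/
theorem remainder_Rh_estimate (n : ℕ) (b T : ℝ) (hb : 0 < b) (hT : 0 < T)
    (τ δ : ℝ) (hτ : τ ∈ Set.Icc 0 b) (hτδ : τ + δ ∈ Set.Icc (0:ℝ) b)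
    (h h' : ℝ → EuclideanSpace ℝ (Fin n))
    (hprim : ∀ t, h t = ∫ s in (0:ℝ)..t, h' s)
    (hL2 : MemLp h' 2 volume)
    (hzero : ∀ t, t ≤ 0 → h' t = 0) (hzeroT : ∀ t, T ≤ t → h' t = 0) :
    (eLpNorm (fun t => δ • ∫ s in (0:ℝ)..1, h' (t - τ - s * δ)) 2
        (volume.restrict (Set.Ioo 0 T))).toReal ≤ |δ| * H1Norm n b T h h' := by
  rcases eq_or_ne δ 0 with hδ | hδ
  · simp only [hδ, zero_smul, eLpNorm_zero', ENNReal.toReal_zero, abs_zero, zero_mul, le_refl]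
  -- strongly measurable representative
  set g := hL2.1.mk h' with hgdef
  have hgsm : StronglyMeasurable g := hL2.1.stronglyMeasurable_mk
  have hae : h' =ᵐ[volume] g := hL2.1.ae_eq_mk
  -- quasi measure preserving of affine maps
  have qmp : ∀ t : ℝ, Measure.QuasiMeasurePreserving
      (fun s : ℝ => t - τ - s * δ) volume volume := by
    intro t
    refine ⟨by fun_prop, ?_⟩
    have heq : (fun s : ℝ => t - τ - s * δ)
        = (fun x : ℝ => x + (t - τ)) ∘ (fun s : ℝ => (-δ) * s) := by
      funext s; simp [Function.comp]; ring
    rw [heq, ← Measure.map_map (by fun_prop) (by fun_prop),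
      Real.map_volume_mul_left (neg_ne_zero.mpr hδ), Measure.map_smul,
      map_add_right_eq_self volume (t - τ)]
    exact Measure.AbsolutelyContinuous.rfl.smul_left _
  -- rewrite the integrand with g
  have key : ∀ t : ℝ, (∫ s in (0:ℝ)..1, h' (t - τ - s * δ))
      = ∫ s in Set.Ioc (0:ℝ) 1, g (t - τ - s * δ) := by
    intro t
    rw [intervalIntegral.integral_of_le zero_le_one]
    refine integral_congr_ae (ae_restrict_of_ae ?_)
    filter_upwards [(qmp t).ae_eq_comp hae] with s hs using hs
  have hFeq : (fun t => δ • ∫ s in (0:ℝ)..1, h' (t - τ - s * δ))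
      = fun t => δ • ∫ s in Set.Ioc (0:ℝ) 1, g (t - τ - s * δ) := by
    funext t; rw [key t]
  rw [hFeq]
  set ν := volume.restrict (Set.Ioc (0:ℝ) 1) with hν
  set μ := volume.restrict (Set.Ioo (0:ℝ) T) with hμ
  set I := ∫⁻ (x : ℝ), (‖g x‖₊ : ℝ≥0∞) ^ (2:ℝ) with hI
  set J := (‖δ‖₊ : ℝ≥0∞) with hJ
  -- pointwise Jensen bound
  have jensen : ∀ t : ℝ, (‖δ • ∫ s in Set.Ioc (0:ℝ) 1, g (t - τ - s * δ)‖₊ : ℝ≥0∞) ^ (2:ℝ)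
      ≤ J ^ (2:ℝ) * ∫⁻ s, (‖g (t - τ - s * δ)‖₊ : ℝ≥0∞) ^ (2:ℝ) ∂ν := by
    intro t
    have hmeas : Measurable fun s : ℝ => (‖g (t - τ - s * δ)‖₊ : ℝ≥0∞) :=
      (hgsm.measurable.comp (by fun_prop)).nnnorm.coe_nnreal_ennreal
    have h1 : (‖∫ s in Set.Ioc (0:ℝ) 1, g (t - τ - s * δ)‖₊ : ℝ≥0∞)
        ≤ ∫⁻ s, (‖g (t - τ - s * δ)‖₊ : ℝ≥0∞) ∂ν :=
      enorm_integral_le_lintegral_enorm _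
    have holder : (∫⁻ s, (‖g (t - τ - s * δ)‖₊ : ℝ≥0∞) ∂ν)
        ≤ (∫⁻ s, (‖g (t - τ - s * δ)‖₊ : ℝ≥0∞) ^ (2:ℝ) ∂ν) ^ (1/(2:ℝ)) := by
      have hpq : (2:ℝ).HolderConjugate 2 := Real.HolderConjugate.two_two
      have := ENNReal.lintegral_mul_le_Lp_mul_Lq ν hpq hmeas.aemeasurable
        (aemeasurable_const (b := (1:ℝ≥0∞)))
      simp only [Pi.mul_apply, mul_one, ENNReal.one_rpow, lintegral_const, one_mul] at this
      calc (∫⁻ s, (‖g (t - τ - s * δ)‖₊ : ℝ≥0∞) ∂ν)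
          ≤ (∫⁻ s, (‖g (t - τ - s * δ)‖₊ : ℝ≥0∞) ^ (2:ℝ) ∂ν) ^ (1/(2:ℝ))
            * (ν Set.univ) ^ (1/(2:ℝ)) := this
        _ = (∫⁻ s, (‖g (t - τ - s * δ)‖₊ : ℝ≥0∞) ^ (2:ℝ) ∂ν) ^ (1/(2:ℝ)) := by
            rw [hν, Measure.restrict_apply_univ, Real.volume_Ioc]
            norm_num
    have h2 : (‖δ • ∫ s in Set.Ioc (0:ℝ) 1, g (t - τ - s * δ)‖₊ : ℝ≥0∞)
        = J * (‖∫ s in Set.Ioc (0:ℝ) 1, g (t - τ - s * δ)‖₊ : ℝ≥0∞) := by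
      rw [hJ, ← ENNReal.coe_mul, nnnorm_smul]
    rw [h2, ENNReal.mul_rpow_of_nonneg _ _ (by norm_num : (0:ℝ) ≤ 2)]
    refine mul_le_mul_right ?_ _
    calc (‖∫ s in Set.Ioc (0:ℝ) 1, g (t - τ - s * δ)‖₊ : ℝ≥0∞) ^ (2:ℝ)
        ≤ ((∫⁻ s, (‖g (t - τ - s * δ)‖₊ : ℝ≥0∞) ^ (2:ℝ) ∂ν) ^ (1/(2:ℝ))) ^ (2:ℝ) :=
          ENNReal.rpow_le_rpow (h1.trans holder) (by norm_num)
      _ = ∫⁻ s, (‖g (t - τ - s * δ)‖₊ : ℝ≥0∞) ^ (2:ℝ) ∂ν := by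
          rw [← ENNReal.rpow_mul]; norm_num
  -- integrate the pointwise bound and swap integrals
  have swap : ∫⁻ t, (∫⁻ s, (‖g (t - τ - s * δ)‖₊ : ℝ≥0∞) ^ (2:ℝ) ∂ν) ∂μ
      = ∫⁻ s, (∫⁻ t, (‖g (t - τ - s * δ)‖₊ : ℝ≥0∞) ^ (2:ℝ) ∂μ) ∂ν := by
    refine lintegral_lintegral_swap ?_
    apply Measurable.aemeasurable
    have : Measurable fun p : ℝ × ℝ => g (p.1 - τ - p.2 * δ) :=
      hgsm.measurable.comp (by fun_prop)
    exact this.nnnorm.coe_nnreal_ennreal.pow_const _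
  have inner_le : ∀ s : ℝ, (∫⁻ t, (‖g (t - τ - s * δ)‖₊ : ℝ≥0∞) ^ (2:ℝ) ∂μ) ≤ I := by
    intro s
    have hmg : Measurable fun x : ℝ => (‖g x‖₊ : ℝ≥0∞) ^ (2:ℝ) :=
      hgsm.measurable.nnnorm.coe_nnreal_ennreal.pow_const _
    calc (∫⁻ t, (‖g (t - τ - s * δ)‖₊ : ℝ≥0∞) ^ (2:ℝ) ∂μ)
        ≤ ∫⁻ t : ℝ, (‖g (t - τ - s * δ)‖₊ : ℝ≥0∞) ^ (2:ℝ) := by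
          rw [hμ]; exact lintegral_mono' Measure.restrict_le_self le_rfl
      _ = I := by
          rw [hI]
          have : ∀ t : ℝ, t - τ - s * δ = t - (τ + s * δ) := fun t => by ring
          simp_rw [this]
          exact (measurePreserving_sub_right volume (τ + s * δ)).lintegral_comp hmg
  have total : ∫⁻ t, (‖δ • ∫ s in Set.Ioc (0:ℝ) 1, g (t - τ - s * δ)‖₊ : ℝ≥0∞) ^ (2:ℝ) ∂μ
      ≤ J ^ (2:ℝ) * I := by
    calc ∫⁻ t, (‖δ • ∫ s in Set.Ioc (0:ℝ) 1, g (t - τ - s * δ)‖₊ : ℝ≥0∞) ^ (2:ℝ) ∂μ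
        ≤ ∫⁻ t, J ^ (2:ℝ) * ∫⁻ s, (‖g (t - τ - s * δ)‖₊ : ℝ≥0∞) ^ (2:ℝ) ∂ν ∂μ :=
          lintegral_mono jensen
      _ = J ^ (2:ℝ) * ∫⁻ t, (∫⁻ s, (‖g (t - τ - s * δ)‖₊ : ℝ≥0∞) ^ (2:ℝ) ∂ν) ∂μ := by
          rw [lintegral_const_mul]
          exact Measurable.lintegral_prod_right
            ((hgsm.measurable.comp (by fun_prop : Measurable fun p : ℝ × ℝ =>
              p.1 - τ - p.2 * δ)).nnnorm.coe_nnreal_ennreal.pow_const _)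
      _ = J ^ (2:ℝ) * ∫⁻ s, (∫⁻ t, (‖g (t - τ - s * δ)‖₊ : ℝ≥0∞) ^ (2:ℝ) ∂μ) ∂ν := by
          rw [swap]
      _ ≤ J ^ (2:ℝ) * ∫⁻ _ : ℝ, I ∂ν := by
          exact mul_le_mul_right (lintegral_mono inner_le) _
      _ = J ^ (2:ℝ) * I := by
          rw [lintegral_const, hν, Measure.restrict_apply_univ, Real.volume_Ioc]
          norm_num
  -- conclude about the eLpNorm
  have hC : eLpNorm (fun t => δ • ∫ s in Set.Ioc (0:ℝ) 1, g (t - τ - s * δ)) 2 μ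
      ≤ J * eLpNorm g 2 volume := by
    rw [eLpNorm_eq_lintegral_rpow_enorm_toReal (by norm_num) (by norm_num),
      eLpNorm_eq_lintegral_rpow_enorm_toReal (by norm_num) (by norm_num)]
    simp only [ENNReal.toReal_ofNat]
    calc (∫⁻ t, (‖δ • ∫ s in Set.Ioc (0:ℝ) 1, g (t - τ - s * δ)‖₊ : ℝ≥0∞) ^ (2:ℝ) ∂μ)
          ^ (1/(2:ℝ))
        ≤ (J ^ (2:ℝ) * I) ^ (1/(2:ℝ)) := ENNReal.rpow_le_rpow total (by norm_num)
      _ = J * I ^ (1/(2:ℝ)) := by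
          rw [ENNReal.mul_rpow_of_nonneg _ _ (by norm_num : (0:ℝ) ≤ 1/2),
            ← ENNReal.rpow_mul]
          norm_num
  have hgh : eLpNorm g 2 volume = eLpNorm h' 2 volume := (eLpNorm_congr_ae hae).symm
  -- h' vanishes outside (-b,T)
  have hind : (Set.Ioo (-b) T).indicator h' = h' := by
    funext t
    by_cases ht : t ∈ Set.Ioo (-b) T
    · simp [ht]
    · simp only [Set.indicator_of_notMem ht]
      rcases not_and_or.mp ht with h1 | h1
      · exact (hzero t (le_trans (not_lt.mp h1) (neg_nonpos_of_nonneg hb.le))).symm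
      · exact (hzeroT t (not_lt.mp h1)).symm
  have hrestr : eLpNorm h' 2 volume = eLpNorm h' 2 (volume.restrict (Set.Ioo (-b) T)) := by
    conv_lhs => rw [← hind]
    exact eLpNorm_indicator_eq_eLpNorm_restrict measurableSet_Ioo
  set C := eLpNorm h' 2 (volume.restrict (Set.Ioo (-b) T)) with hCdef
  have hfin : C ≠ ∞ := by
    rw [← hrestr]; exact hL2.2.ne
  have hmain : eLpNorm (fun t => δ • ∫ s in Set.Ioc (0:ℝ) 1, g (t - τ - s * δ)) 2 μ
      ≤ J * C := by
    calc eLpNorm (fun t => δ • ∫ s in Set.Ioc (0:ℝ) 1, g (t - τ - s * δ)) 2 μ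
        ≤ J * eLpNorm g 2 volume := hC
      _ = J * C := by rw [hgh, hrestr]
  have hJC : (J * C) ≠ ∞ := ENNReal.mul_ne_top ENNReal.coe_ne_top hfin
  calc (eLpNorm (fun t => δ • ∫ s in Set.Ioc (0:ℝ) 1, g (t - τ - s * δ)) 2 μ).toReal
      ≤ (J * C).toReal := ENNReal.toReal_mono hJC hmain
    _ = |δ| * C.toReal := by
        rw [ENNReal.toReal_mul, hJ, ENNReal.coe_toReal, coe_nnnorm, Real.norm_eq_abs]
    _ ≤ |δ| * H1Norm n b T h h' := by
        refine mul_le_mul_of_nonneg_left ?_ (abs_nonneg δ)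
        unfold H1Norm
        rw [← hCdef]
        calc C.toReal = Real.sqrt (C.toReal ^ 2) := (Real.sqrt_sq ENNReal.toReal_nonneg).symm
          _ ≤ _ := Real.sqrt_le_sqrt (le_add_of_nonneg_left (sq_nonneg _))
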